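/- In the ransomware case study, let κ > 0, μ₂ ∈ [0, 1], c ∈ (0, 1), p ≥ 0, m > 0 and x_L < x_H. Define the insured user's perceived cost under investment x ∈ {x_L, x_H} as Ũ(x) = (1 − μ₂)·E_q[(1−c)²ξ² + m x + p] + μ₂·ρ_κ,q[(1−c)²ξ² + m x + p], where q = q_L = (0.3, 0.4, 0.3) if x = x_L and q = q_H = (0.5, 0.3, 0.2) if x = x_H, ξ taking the values 1, 2, 3 with these probabilities. Then Ũ(x_H) − Ũ(x_L) = m·(x_H − x_L) − (1−c)²·(1.1 + 0.07·κ·μ₂). Consequently, if m·(x_H − x_L) > (1−c)²·(1.1 + 0.07·κ·μ₂), then Ũ(x_H) > Ũ(x_L), so the insured user strictly prefers the low security investment x_L, exhibiting moral hazard. -/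
import Mathlib


/-- Expectation of the values `z` under the probability vector `q` on three outcomes. -/
noncomputable def expect3 (q z : Fin 3 → ℝ) : ℝ := ∑ i, q i * z i

/-- Absolute semideviation risk measure `ρ_κ[Z] = E[Z] + κ·E[max(Z - E[Z], 0)]` under `q`. -/
noncomputable def semidev3 (κ : ℝ) (q z : Fin 3 → ℝ) : ℝ :=
  expect3 q z + κ * ∑ i, q i * max (z i - expect3 q z) 0

/-- Population-averaged perceived cost: fraction `1 - μ₂` of type θ₁ (expectation) and
fraction `μ₂` of type θ₂ (absolute semideviation with parameter `κ`). -/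
noncomputable def perceivedCost3 (κ μ2 : ℝ) (q z : Fin 3 → ℝ) : ℝ :=
  (1 - μ2) * expect3 q z + μ2 * semidev3 κ q z

/-- Loss distribution over `ξ ∈ {1,2,3}` under the low security investment `x_L`. -/
noncomputable def qLow : Fin 3 → ℝ := ![0.3, 0.4, 0.3]

/-- Loss distribution over `ξ ∈ {1,2,3}` under the high security investment `x_H`. -/
noncomputable def qHigh : Fin 3 → ℝ := ![0.5, 0.3, 0.2]

/-- Insured user's random cost at outcome `i` (loss `ξ = i + 1`): retained perceived loss
`((1-c)ξ)²`, investment cost `m·x`, and premium `p`. -/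
noncomputable def insuredCost (c m x p : ℝ) : Fin 3 → ℝ :=
  fun i => (1 - c) ^ 2 * (((i : ℕ) : ℝ) + 1) ^ 2 + m * x + p

/-- in the ransomware case study,
`Ũ(x_H) - Ũ(x_L) = m·(x_H - x_L) - (1-c)²·(1.1 + 0.07·κ·μ₂)`; consequently, if
`m·(x_H - x_L) > (1-c)²·(1.1 + 0.07·κ·μ₂)` then `Ũ(x_H) > Ũ(x_L)`, so the insured user
strictly prefers the low security investment `x_L` (moral hazard). -/
lemma aux_low (κ s a : ℝ) (hs : 0 ≤ s) :
    semidev3 κ qLow (fun i => s * (((i : ℕ) : ℝ) + 1) ^ 2 + a)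
      = 4.6 * s + a + κ * (1.32 * s) := by
  have hE : expect3 qLow (fun i => s * (((i : ℕ) : ℝ) + 1) ^ 2 + a) = 4.6 * s + a := by
    simp [expect3, qLow, Fin.sum_univ_three]; ring
  simp only [semidev3]
  rw [hE]
  simp only [qLow, Fin.sum_univ_three, Matrix.cons_val_zero, Matrix.cons_val_one,
    Matrix.head_cons, Matrix.cons_val_two, Matrix.tail_cons]
  norm_num
  have h1 : max (s - 23/5*s) 0 = 0 := max_eq_right (by nlinarith)
  have h2 : max (s * 4 - 23/5*s) 0 = 0 := max_eq_right (by nlinarith)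
  have h3 : max (s * 9 - 23/5*s) 0 = 22/5*s := by
    rw [max_eq_left (by nlinarith)]; ring
  left; rw [h1, h2, h3]; ring

lemma aux_high (κ s a : ℝ) (hs : 0 ≤ s) :
    semidev3 κ qHigh (fun i => s * (((i : ℕ) : ℝ) + 1) ^ 2 + a)
      = 3.5 * s + a + κ * (1.25 * s) := by
  have hE : expect3 qHigh (fun i => s * (((i : ℕ) : ℝ) + 1) ^ 2 + a) = 3.5 * s + a := by
    simp [expect3, qHigh, Fin.sum_univ_three]; ring
  simp only [semidev3]
  rw [hE]
  simp only [qHigh, Fin.sum_univ_three, Matrix.cons_val_zero, Matrix.cons_val_one,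
    Matrix.head_cons, Matrix.cons_val_two, Matrix.tail_cons]
  norm_num
  have h1 : max (s - 7/2*s) 0 = 0 := max_eq_right (by nlinarith)
  have h2 : max (s * 4 - 7/2*s) 0 = 1/2*s := by
    rw [max_eq_left (by nlinarith)]; ring
  have h3 : max (s * 9 - 7/2*s) 0 = 11/2*s := by
    rw [max_eq_left (by nlinarith)]; ring
  left; rw [h1, h2, h3]; ring

lemma expect_low (s a : ℝ) :
    expect3 qLow (fun i => s * (((i : ℕ) : ℝ) + 1) ^ 2 + a) = 4.6 * s + a := by
  simp [expect3, qLow, Fin.sum_univ_three]; ring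

lemma expect_high (s a : ℝ) :
    expect3 qHigh (fun i => s * (((i : ℕ) : ℝ) + 1) ^ 2 + a) = 3.5 * s + a := by
  simp [expect3, qHigh, Fin.sum_univ_three]; ring

theorem ransomware_moral_hazard
    (κ μ2 c p m xL xH : ℝ)
    (hκ : 0 < κ) (hμ2 : μ2 ∈ Set.Icc (0 : ℝ) 1) (hc : c ∈ Set.Ioo (0 : ℝ) 1)
    (hp : 0 ≤ p) (hm : 0 < m) (hx : xL < xH) :
    perceivedCost3 κ μ2 qHigh (insuredCost c m xH p) -
        perceivedCost3 κ μ2 qLow (insuredCost c m xL p) =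
      m * (xH - xL) - (1 - c) ^ 2 * (1.1 + 0.07 * κ * μ2) ∧
    (m * (xH - xL) > (1 - c) ^ 2 * (1.1 + 0.07 * κ * μ2) →
      perceivedCost3 κ μ2 qHigh (insuredCost c m xH p) >
        perceivedCost3 κ μ2 qLow (insuredCost c m xL p)) := by
  set s := (1 - c) ^ 2 with hsdef
  have hs : 0 ≤ s := sq_nonneg _
  have hH : insuredCost c m xH p = fun i : Fin 3 => s * (((i : ℕ) : ℝ) + 1) ^ 2 + (m * xH + p) := by
    funext i; simp [insuredCost, hsdef]; ring
  have hL : insuredCost c m xL p = fun i : Fin 3 => s * (((i : ℕ) : ℝ) + 1) ^ 2 + (m * xL + p) := by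
    funext i; simp [insuredCost, hsdef]; ring
  have key : perceivedCost3 κ μ2 qHigh (insuredCost c m xH p) -
      perceivedCost3 κ μ2 qLow (insuredCost c m xL p) =
      m * (xH - xL) - s * (1.1 + 0.07 * κ * μ2) := by
    rw [perceivedCost3, perceivedCost3, hH, hL, aux_low κ s (m * xL + p) hs,
      aux_high κ s (m * xH + p) hs, expect_low, expect_high]
    ring
  exact ⟨key, fun h => by rw [gt_iff_lt, ← sub_pos, key]; linarith⟩
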